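/- Let m, n ≥ 1. Any two proper 3-colorings of the m×n grid graph can be transformed into one another by a finite sequence of single-vertex recoloring steps, each intermediate coloring being a proper 3-coloring. -/

import Mathlib

/-- Adjacency in the `m × n` grid graph: two vertices are adjacent iff they differ by
`1` in exactly one coordinate. -/
def GridAdj {m n : ℕ} (u v : Fin m × Fin n) : Prop :=
  (u.1 = v.1 ∧ ((u.2 : ℕ) = (v.2 : ℕ) + 1 ∨ (v.2 : ℕ) = (u.2 : ℕ) + 1)) ∨
  (u.2 = v.2 ∧ ((u.1 : ℕ) = (v.1 : ℕ) + 1 ∨ (v.1 : ℕ) = (u.1 : ℕ) + 1))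

/-- A proper 3-coloring of the `m × n` grid graph. -/
def Proper3 {m n : ℕ} (c : Fin m × Fin n → ZMod 3) : Prop :=
  ∀ u v : Fin m × Fin n, GridAdj u v → c u ≠ c v

/-- A height function for a 3-coloring `c`: congruent to `c` mod 3 at every vertex,
and differing by exactly `1` across every edge of the grid graph. -/
def IsHeight {m n : ℕ} (c : Fin m × Fin n → ZMod 3) (h : Fin m × Fin n → ℤ) : Prop :=
  (∀ v : Fin m × Fin n, ((h v : ℤ) : ZMod 3) = c v) ∧
  ∀ u v : Fin m × Fin n, GridAdj u v → |h u - h v| = 1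

namespace GridConn

lemma gridAdj_symm {m n : ℕ} {u v : Fin m × Fin n} (h : GridAdj u v) : GridAdj v u := by
  unfold GridAdj at *; tauto

lemma gridAdj_irrefl {m n : ℕ} (v : Fin m × Fin n) : ¬ GridAdj v v := by
  unfold GridAdj; rintro (⟨-, h | h⟩ | ⟨-, h | h⟩) <;> omega

/-- local step function -/
def dlt (a b : ZMod 3) : ℤ := if b - a = 1 then 1 else -1

lemma dlt_cast {a b : ZMod 3} (h : a ≠ b) : ((dlt a b : ℤ) : ZMod 3) = b - a := by
  revert h; revert a b; decide

lemma dlt_abs {a b : ZMod 3} (h : a ≠ b) : |dlt a b| = 1 := by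
  revert h; revert a b; decide

lemma dlt_pm (a b : ZMod 3) : dlt a b = 1 ∨ dlt a b = -1 := by
  unfold dlt; split <;> simp

lemma dlt_square {a b d e : ZMod 3} (h1 : a ≠ b) (h2 : b ≠ d) (h3 : a ≠ e) (h4 : e ≠ d) :
    dlt a b + dlt b d = dlt a e + dlt e d := by
  revert h1 h2 h3 h4; revert a b d e; decide

/-- Connectivity by single-vertex recolorings. -/
def Conn {m n : ℕ} (c c' : Fin m × Fin n → ZMod 3) : Prop :=
  ∃ (L : ℕ) (seq : ℕ → Fin m × Fin n → ZMod 3),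
    seq 0 = c ∧ seq L = c' ∧
    (∀ k ≤ L, Proper3 (seq k)) ∧
    (∀ k < L, ∃ v, seq (k + 1) v ≠ seq k v ∧ ∀ u, u ≠ v → seq (k + 1) u = seq k u)

lemma conn_refl {m n : ℕ} {c : Fin m × Fin n → ZMod 3} (hc : Proper3 c) : Conn c c :=
  ⟨0, fun _ => c, rfl, rfl, fun _ _ => hc, fun k hk => absurd hk (by omega)⟩

lemma conn_single {m n : ℕ} {c c' : Fin m × Fin n → ZMod 3} (hc : Proper3 c)
    (hc' : Proper3 c') (v : Fin m × Fin n) (hne : c' v ≠ c v)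
    (hoth : ∀ u, u ≠ v → c' u = c u) : Conn c c' := by
  refine ⟨1, fun k => if k = 0 then c else c', by simp, by simp, ?_, ?_⟩
  · intro k _; dsimp only; split <;> assumption
  · intro k hk
    interval_cases k
    exact ⟨v, by simpa using hne, fun u hu => by simpa using hoth u hu⟩

lemma conn_trans {m n : ℕ} {a b c : Fin m × Fin n → ZMod 3}
    (h1 : Conn a b) (h2 : Conn b c) : Conn a c := by
  obtain ⟨L1, s1, e10, e11, p1, st1⟩ := h1
  obtain ⟨L2, s2, e20, e21, p2, st2⟩ := h2
  refine ⟨L1 + L2, fun k => if k ≤ L1 then s1 k else s2 (k - L1), by simp [e10], ?_, ?_, ?_⟩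
  · dsimp only; split
    · have : L2 = 0 := by omega
      subst this
      simp_all
    · have : L1 + L2 - L1 = L2 := by omega
      rw [this, e21]
  · intro k hk; dsimp only; split
    · exact p1 k (by omega)
    · exact p2 (k - L1) (by omega)
  · intro k hk; dsimp only
    by_cases h : k + 1 ≤ L1
    · rw [if_pos h, if_pos (by omega)]
      exact st1 k (by omega)
    · rw [if_neg h]
      by_cases h' : k ≤ L1
      · -- k = L1
        have hkeq : k = L1 := by omega
        rw [if_pos h', hkeq, e11, ← e20]
        have h2 : L1 + 1 - L1 = 0 + 1 := by omega
        rw [h2]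
        exact st2 0 (by omega)
      · rw [if_neg h']
        have : k + 1 - L1 = (k - L1) + 1 := by omega
        rw [this]
        exact st2 (k - L1) (by omega)

lemma conn_neg {m n : ℕ} {a b : Fin m × Fin n → ZMod 3} (h : Conn a b) :
    Conn (fun v => -(a v)) (fun v => -(b v)) := by
  obtain ⟨L, s, e0, e1, p, st⟩ := h
  refine ⟨L, fun k v => -(s k v), by simp only [e0], by simp only [e1], ?_, ?_⟩
  · intro k hk u v huv hne
    exact p k hk u v huv (by simpa using hne)
  · intro k hk
    obtain ⟨v, hv, ho⟩ := st k hk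
    exact ⟨v, by simpa using hv, fun u hu => by simp only [ho u hu]⟩


section Height

variable {m n : ℕ} (hm : 0 < m) (hn : 0 < n) (c : Fin m × Fin n → ZMod 3)

/-- The coloring extended to all of `ℕ × ℕ` by clamping. -/
def cc (i j : ℕ) : ZMod 3 := c (⟨min i (m-1), by omega⟩, ⟨min j (n-1), by omega⟩)

lemma cc_eq (v : Fin m × Fin n) : cc hm hn c (v.1 : ℕ) (v.2 : ℕ) = c v := by
  unfold cc
  congr 1
  have h1 : min (v.1 : ℕ) (m-1) = (v.1 : ℕ) := by have := v.1.isLt; omega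
  have h2 : min (v.2 : ℕ) (n-1) = (v.2 : ℕ) := by have := v.2.isLt; omega
  exact Prod.ext (Fin.ext h1) (Fin.ext h2)

lemma cc_ne_h {i j : ℕ} (hc : Proper3 c) (hi : i + 1 < m) (hj : j < n) :
    cc hm hn c i j ≠ cc hm hn c (i+1) j := by
  apply hc
  unfold GridAdj
  refine Or.inr ⟨rfl, Or.inr ?_⟩
  show min (i+1) (m-1) = min i (m-1) + 1
  omega

lemma cc_ne_v {i j : ℕ} (hc : Proper3 c) (hi : i < m) (hj : j + 1 < n) :
    cc hm hn c i j ≠ cc hm hn c i (j+1) := by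
  apply hc
  unfold GridAdj
  refine Or.inl ⟨rfl, Or.inr ?_⟩
  show min (j+1) (n-1) = min j (n-1) + 1
  omega

/-- The height function, built by summing increments along a path. -/
def hfun (i j : ℕ) : ℤ :=
  (∑ k ∈ Finset.range i, dlt (cc hm hn c k 0) (cc hm hn c (k+1) 0)) +
  ∑ k ∈ Finset.range j, dlt (cc hm hn c i k) (cc hm hn c i (k+1))

lemma hfun_vdiff (i j : ℕ) :
    hfun hm hn c i (j+1) - hfun hm hn c i j
      = dlt (cc hm hn c i j) (cc hm hn c i (j+1)) := by
  unfold hfun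
  rw [Finset.sum_range_succ]
  ring

lemma hfun_hdiff (hc : Proper3 c) :
    ∀ j, j < n → ∀ i, i + 1 < m →
    hfun hm hn c (i+1) j - hfun hm hn c i j
      = dlt (cc hm hn c i j) (cc hm hn c (i+1) j) := by
  intro j
  induction j with
  | zero =>
    intro _ i hi
    unfold hfun
    rw [Finset.sum_range_succ]
    simp
  | succ j ih =>
    intro hj i hi
    have e1 := hfun_vdiff hm hn c i j
    have e2 := hfun_vdiff hm hn c (i+1) j
    have e3 := ih (by omega) i hi
    have sq := dlt_square (cc_ne_h hm hn c hc hi (by omega))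
      (cc_ne_v hm hn c hc (by omega) hj)
      (cc_ne_v hm hn c hc (by omega) hj)
      (cc_ne_h hm hn c hc hi hj)
    linarith

lemma hfun_cast {i j : ℕ} (hc : Proper3 c) (hi : i < m) (hj : j < n) :
    ((hfun hm hn c i j : ℤ) : ZMod 3) = cc hm hn c i j - cc hm hn c 0 0 := by
  unfold hfun
  push_cast
  rw [Finset.sum_congr rfl (fun k hk => dlt_cast (cc_ne_h hm hn c hc
        (by have := Finset.mem_range.mp hk; omega) hn)),
      Finset.sum_congr rfl (fun k hk => dlt_cast (cc_ne_v hm hn c hc hi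
        (by have := Finset.mem_range.mp hk; omega))),
      Finset.sum_range_sub (f := fun k => cc hm hn c k 0),
      Finset.sum_range_sub (f := fun k => cc hm hn c i k)]
  ring

lemma even_pm_sum (p : ℕ) (f : ℕ → ℤ) (hf : ∀ k, f k = 1 ∨ f k = -1) :
    Even ((∑ k ∈ Finset.range p, f k) - p) := by
  induction p with
  | zero => simp
  | succ p ih =>
    rw [Finset.sum_range_succ]
    rcases hf p with h | h <;>
      · rw [h, Int.even_iff] at *
        push_cast at *
        omega

lemma hfun_parity (i j : ℕ) :
    Even (hfun hm hn c i j - ((i : ℤ) + j)) := by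
  have h1 := even_pm_sum i (fun k => dlt (cc hm hn c k 0) (cc hm hn c (k+1) 0))
    (fun k => dlt_pm _ _)
  have h2 := even_pm_sum j (fun k => dlt (cc hm hn c i k) (cc hm hn c i (k+1)))
    (fun k => dlt_pm _ _)
  have : hfun hm hn c i j - ((i : ℤ) + j)
      = ((∑ k ∈ Finset.range i, dlt (cc hm hn c k 0) (cc hm hn c (k+1) 0)) - i)
      + ((∑ k ∈ Finset.range j, dlt (cc hm hn c i k) (cc hm hn c i (k+1))) - j) := by
    unfold hfun; ring
  rw [this]
  exact h1.add h2

include hm hn in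
lemma exists_height (hc : Proper3 c) :
    ∃ h : Fin m × Fin n → ℤ, IsHeight c h ∧
      ∀ v : Fin m × Fin n, Even (h v - ((v.1 : ℤ) + (v.2 : ℤ))) := by
  set a : ZMod 3 := cc hm hn c 0 0 with ha
  set r : ℤ := if Even (a.val) then (a.val : ℤ) else (a.val : ℤ) + 3 with hr
  have hr_even : Even r := by
    rw [hr]
    split
    · rename_i h; exact (Int.even_coe_nat _).mpr h
    · rename_i h
      rw [Nat.not_even_iff_odd] at h
      rcases h with ⟨t, ht⟩
      exact ⟨t + 2, by push_cast [ht]; ring⟩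
  have hv_cast : ((a.val : ℤ) : ZMod 3) = a := by
    push_cast
    simp [ZMod.natCast_val, ZMod.cast_id]
  have h3 : ((3 : ℤ) : ZMod 3) = 0 := by decide
  have hr_cast : ((r : ℤ) : ZMod 3) = a := by
    rw [hr]
    split
    · exact hv_cast
    · rw [Int.cast_add, hv_cast, h3, add_zero]
  refine ⟨fun v => hfun hm hn c v.1 v.2 + r, ⟨?_, ?_⟩, ?_⟩
  · intro v
    push_cast
    rw [hfun_cast hm hn c hc v.1.isLt v.2.isLt, hr_cast, cc_eq]
    ring
  · intro u v huv
    rcases huv with ⟨h1, h2 | h2⟩ | ⟨h1, h2 | h2⟩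
    · -- u.1 = v.1, u.2 = v.2 + 1
      have h1' : (u.1 : ℕ) = (v.1 : ℕ) := by rw [h1]
      have key : hfun hm hn c u.1 u.2 - hfun hm hn c v.1 v.2
          = dlt (cc hm hn c v.1 v.2) (cc hm hn c v.1 (v.2+1)) := by
        rw [h1', h2]; exact hfun_vdiff hm hn c v.1 v.2
      have : (fun v => hfun hm hn c v.1 v.2 + r) u - (fun v => hfun hm hn c v.1 v.2 + r) v
          = dlt (cc hm hn c v.1 v.2) (cc hm hn c v.1 (v.2+1)) := by
        simpa using key
      rw [this]
      exact dlt_abs (cc_ne_v hm hn c hc v.1.isLt (by rw [← h2]; exact u.2.isLt))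
    · -- v.2 = u.2 + 1
      have h1' : (v.1 : ℕ) = (u.1 : ℕ) := by rw [h1]
      have key : hfun hm hn c v.1 v.2 - hfun hm hn c u.1 u.2
          = dlt (cc hm hn c u.1 u.2) (cc hm hn c u.1 (u.2+1)) := by
        rw [h1', h2]; exact hfun_vdiff hm hn c u.1 u.2
      have : (fun v => hfun hm hn c v.1 v.2 + r) u - (fun v => hfun hm hn c v.1 v.2 + r) v
          = -(dlt (cc hm hn c u.1 u.2) (cc hm hn c u.1 (u.2+1))) := by
        simp only []
        linarith
      rw [this, abs_neg]
      exact dlt_abs (cc_ne_v hm hn c hc u.1.isLt (by rw [← h2]; exact v.2.isLt))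
    · -- u.2 = v.2, u.1 = v.1 + 1
      have h1' : (u.2 : ℕ) = (v.2 : ℕ) := by rw [h1]
      have key : hfun hm hn c u.1 u.2 - hfun hm hn c v.1 v.2
          = dlt (cc hm hn c v.1 v.2) (cc hm hn c (v.1+1) v.2) := by
        rw [h1', h2]
        exact hfun_hdiff hm hn c hc v.2 v.2.isLt v.1 (by rw [← h2]; exact u.1.isLt)
      have : (fun v => hfun hm hn c v.1 v.2 + r) u - (fun v => hfun hm hn c v.1 v.2 + r) v
          = dlt (cc hm hn c v.1 v.2) (cc hm hn c (v.1+1) v.2) := by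
        simpa using key
      rw [this]
      exact dlt_abs (cc_ne_h hm hn c hc (by rw [← h2]; exact u.1.isLt) v.2.isLt)
    · -- v.1 = u.1 + 1
      have h1' : (v.2 : ℕ) = (u.2 : ℕ) := by rw [h1]
      have key : hfun hm hn c v.1 v.2 - hfun hm hn c u.1 u.2
          = dlt (cc hm hn c u.1 u.2) (cc hm hn c (u.1+1) u.2) := by
        rw [h1', h2]
        exact hfun_hdiff hm hn c hc u.2 u.2.isLt u.1 (by rw [← h2]; exact v.1.isLt)
      have : (fun v => hfun hm hn c v.1 v.2 + r) u - (fun v => hfun hm hn c v.1 v.2 + r) v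
          = -(dlt (cc hm hn c u.1 u.2) (cc hm hn c (u.1+1) u.2)) := by
        simp only []
        linarith
      rw [this, abs_neg]
      exact dlt_abs (cc_ne_h hm hn c hc (by rw [← h2]; exact v.1.isLt) u.2.isLt)
  · intro v
    have h1 := hfun_parity hm hn c (v.1 : ℕ) (v.2 : ℕ)
    have : (fun v => hfun hm hn c v.1 v.2 + r) v - ((v.1 : ℤ) + (v.2 : ℤ))
        = (hfun hm hn c v.1 v.2 - ((v.1 : ℤ) + v.2)) + r := by ring
    rw [this]
    exact h1.add hr_even

end Height


lemma proper_of_height {m n : ℕ} {c : Fin m × Fin n → ZMod 3} {h : Fin m × Fin n → ℤ}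
    (H : IsHeight c h) : Proper3 c := by
  intro u v huv heq
  have h1 := H.2 u v huv
  have h2 := H.1 u
  have h3 := H.1 v
  have h4 : h u - h v = 1 ∨ h u - h v = -1 := by
    rcases (abs_eq (by norm_num : (0:ℤ) ≤ 1)).mp h1 with e | e
    · exact Or.inl e
    · exact Or.inr e
  have hcast : ((h u - h v : ℤ) : ZMod 3) = 0 := by
    push_cast
    rw [h2, h3, heq]
    ring
  rcases h4 with e | e <;> rw [e] at hcast <;> revert hcast <;> decide

variable {m n : ℕ}

lemma neg_height {c : Fin m × Fin n → ZMod 3} {h : Fin m × Fin n → ℤ}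
    (H : IsHeight c h) : IsHeight (fun v => -(c v)) (fun v => -(h v)) := by
  constructor
  · intro v
    push_cast
    rw [H.1 v]
  · intro u v huv
    have := H.2 u v huv
    rw [show -h u - -h v = -(h u - h v) by ring, abs_neg]
    exact this

lemma key (hm : 0 < m) (hn : 0 < n) (N : ℕ) :
    ∀ (c c' : Fin m × Fin n → ZMod 3) (h g : Fin m × Fin n → ℤ),
    IsHeight c h → IsHeight c' g → (∀ v, Even (h v - g v)) →
    (∑ v : Fin m × Fin n, (h v - g v).natAbs) = N → Conn c c' := by
  induction N using Nat.strong_induction_on with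
  | _ N IH =>
  have step : ∀ (c c' : Fin m × Fin n → ZMod 3) (h g : Fin m × Fin n → ℤ),
      IsHeight c h → IsHeight c' g → (∀ v, Even (h v - g v)) →
      (∑ v : Fin m × Fin n, (h v - g v).natAbs) = N →
      (∃ v, g v < h v) → Conn c c' := by
    rintro c c' h g Hh Hg Hev Hsum ⟨w0, hw0⟩
    obtain ⟨w, -, hw⟩ := Finset.exists_max_image Finset.univ (fun v => h v - g v)
      ⟨w0, Finset.mem_univ w0⟩
    set M := h w - g w with hM
    have hMpos : 0 < M := lt_of_lt_of_le (by omega) (hw w0 (Finset.mem_univ w0))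
    set T : Finset (Fin m × Fin n) := Finset.univ.filter (fun v => h v - g v = M) with hT
    have hTne : T.Nonempty := ⟨w, by simp [hT, hM]⟩
    obtain ⟨v, hvT, hv⟩ := Finset.exists_max_image T h hTne
    have hdv : h v - g v = M := (Finset.mem_filter.mp hvT).2
    have hM2 : 2 ≤ M := by
      have hev := Hev v
      rw [hdv, Int.even_iff] at hev
      omega
    have hloc : ∀ u, GridAdj u v → h u = h v - 1 := by
      intro u hadj
      have h1 := Hh.2 u v hadj
      have h2 := Hg.2 u v hadj
      have h1' : h u - h v = 1 ∨ h u - h v = -1 := by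
        rcases (abs_eq (by norm_num : (0:ℤ) ≤ 1)).mp h1 with e | e
        · exact Or.inl e
        · exact Or.inr e
      have h2' : g u - g v = 1 ∨ g u - g v = -1 := by
        rcases (abs_eq (by norm_num : (0:ℤ) ≤ 1)).mp h2 with e | e
        · exact Or.inl e
        · exact Or.inr e
      rcases h1' with e1 | e1
      · exfalso
        have hle : h u - g u ≤ M := hw u (Finset.mem_univ u)
        rcases h2' with e2 | e2
        · have huT : u ∈ T := by
            rw [hT, Finset.mem_filter]
            exact ⟨Finset.mem_univ u, by omega⟩
          have := hv u huT
          omega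
        · omega
      · omega
    set c2 : Fin m × Fin n → ZMod 3 := Function.update c v (c v + 1) with hc2
    set h2 : Fin m × Fin n → ℤ := Function.update h v (h v - 2) with hh2
    have Hh2 : IsHeight c2 h2 := by
      constructor
      · intro u
        by_cases hu : u = v
        · subst hu
          rw [hh2, hc2]
          simp only [Function.update_self]
          push_cast
          rw [Hh.1 u]
          have e : ∀ x : ZMod 3, x - 2 = x + 1 := by decide
          exact e _
        · rw [hh2, hc2]
          simp only [Function.update_of_ne hu]
          exact Hh.1 u
      · intro u u' hadj
        rw [hh2]
        by_cases e1 : u = v <;> by_cases e2 : u' = v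
        · subst e1; subst e2; exact absurd hadj (gridAdj_irrefl _)
        · subst e1
          rw [Function.update_self, Function.update_of_ne e2,
            hloc u' (gridAdj_symm hadj)]
          norm_num
        · subst e2
          rw [Function.update_self, Function.update_of_ne e1, hloc u hadj]
          norm_num
        · rw [Function.update_of_ne e1, Function.update_of_ne e2]
          exact Hh.2 u u' hadj
    have hc2v : c2 v ≠ c v := by
      rw [hc2]
      simp only [Function.update_self]
      intro hcon
      have : (1 : ZMod 3) = 0 := by
        have := sub_eq_zero.mpr hcon
        rwa [add_sub_cancel_left] at this
      revert this
      decide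
    have step1 : Conn c c2 :=
      conn_single (proper_of_height Hh) (proper_of_height Hh2) v hc2v
        (fun u hu => by rw [hc2]; exact Function.update_of_ne hu _ _)
    have hsplit : ∀ f : Fin m × Fin n → ℕ,
        (∑ u : Fin m × Fin n, f u) = f v + ∑ u ∈ Finset.univ.erase v, f u :=
      fun f => (Finset.add_sum_erase _ f (Finset.mem_univ v)).symm
    have hE : ∑ u ∈ Finset.univ.erase v, (h2 u - g u).natAbs
        = ∑ u ∈ Finset.univ.erase v, (h u - g u).natAbs := by
      apply Finset.sum_congr rfl
      intro u hu
      rw [hh2, Function.update_of_ne (Finset.ne_of_mem_erase hu)]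
    have hsum2 : (∑ u : Fin m × Fin n, (h2 u - g u).natAbs) + 2 = N := by
      rw [hsplit (fun u => (h2 u - g u).natAbs), hE]
      rw [hsplit (fun u => (h u - g u).natAbs)] at Hsum
      have hv2 : h2 v = h v - 2 := by rw [hh2]; simp
      rw [hv2]
      omega
    have Hev2 : ∀ u, Even (h2 u - g u) := by
      intro u
      by_cases hu : u = v
      · subst hu
        rw [hh2]
        simp only [Function.update_self]
        have := Hev u
        rw [Int.even_iff] at *
        omega
      · rw [hh2, Function.update_of_ne hu]
        exact Hev u
    have step2 : Conn c2 c' :=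
      IH (N - 2) (by omega) c2 c' h2 g Hh2 Hg Hev2 (by omega)
    exact conn_trans step1 step2
  intro c c' h g Hh Hg Hev Hsum
  by_cases hall : ∀ v, h v = g v
  · have : c = c' := funext fun v => by rw [← Hh.1 v, ← Hg.1 v, hall v]
    rw [this]
    exact conn_refl (proper_of_height Hg)
  · push_neg at hall
    by_cases hpos : ∃ v, g v < h v
    · exact step c c' h g Hh Hg Hev Hsum hpos
    · push_neg at hpos
      have hneg : ∃ v, (fun v => -(g v)) v < (fun v => -(h v)) v := by
        obtain ⟨v, hvne⟩ := hall
        exact ⟨v, by have := hpos v; simp only []; omega⟩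
      have hsum' : (∑ v : Fin m × Fin n, ((-(h v)) - (-(g v))).natAbs) = N := by
        rw [← Hsum]
        apply Finset.sum_congr rfl
        intro u _
        rw [show -(h u) - (-(g u)) = -(h u - g u) by ring, Int.natAbs_neg]
      have hmain := step (fun v => -(c v)) (fun v => -(c' v))
        (fun v => -(h v)) (fun v => -(g v)) (neg_height Hh) (neg_height Hg)
        (fun v => by
          have := (Hev v).neg
          rw [show -(h v - g v) = -(h v) - (-(g v)) by ring] at this
          exact this)
        hsum' hneg
      have := conn_neg hmain
      simpa using this

end GridConn

open GridConn in

/-- Any two proper 3-colorings of the `m × n` grid graph are connected by a finite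
sequence of single-vertex recoloring steps through proper 3-colorings. -/
theorem grid_three_colorings_connected (m n : ℕ) (hm : 1 ≤ m) (hn : 1 ≤ n)
    (c c' : Fin m × Fin n → ZMod 3) (hc : Proper3 c) (hc' : Proper3 c') :
    ∃ (L : ℕ) (seq : ℕ → Fin m × Fin n → ZMod 3),
      seq 0 = c ∧ seq L = c' ∧
      (∀ k ≤ L, Proper3 (seq k)) ∧
      (∀ k < L, ∃ v, seq (k + 1) v ≠ seq k v ∧ ∀ u, u ≠ v → seq (k + 1) u = seq k u) := by
  obtain ⟨h, Hh, Ph⟩ := exists_height hm hn c hc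
  obtain ⟨g, Hg, Pg⟩ := exists_height hm hn c' hc'
  have Hev : ∀ v, Even (h v - g v) := by
    intro v
    have := (Ph v).sub (Pg v)
    rw [show (h v - ((v.1 : ℤ) + (v.2 : ℤ))) - (g v - ((v.1 : ℤ) + (v.2 : ℤ)))
      = h v - g v by ring] at this
    exact this
  exact key hm hn (∑ v : Fin m × Fin n, (h v - g v).natAbs) c c' h g Hh Hg Hev rfl
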